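/- Let X be a random variable with E[X] = μ and Var(X) = σ², and λ > 0. Let ψ be Catoni's influence function (ψ(x) = log(1+x+x²/2) for x ≥ 0, -log(1-x+x²/2) for x < 0) and Y = ψ(λ(X - μ)). Then |E[Y]| ≤ λ²σ²/2. -/

import Mathlib

open MeasureTheory ProbabilityTheory

noncomputable def catoniPsi (x : ℝ) : ℝ :=
  if 0 ≤ x then Real.log (1 + x + x ^ 2 / 2) else -Real.log (1 - x + x ^ 2 / 2)

lemma catoniPsi_aux (x : ℝ) :
    0 < 1 + x + x ^ 2 / 2 ∧ 0 < 1 - x + x ^ 2 / 2 ∧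
      1 ≤ (1 + x + x ^ 2 / 2) * (1 - x + x ^ 2 / 2) := by
  refine ⟨by nlinarith [sq_nonneg (x + 1)], by nlinarith [sq_nonneg (x - 1)], by
    nlinarith [sq_nonneg (x ^ 2)]⟩

lemma catoniPsi_le (x : ℝ) : catoniPsi x ≤ x + x ^ 2 / 2 := by
  obtain ⟨ha, hb, hab⟩ := catoniPsi_aux x
  have hlogab : 0 ≤ Real.log (1 + x + x ^ 2 / 2) + Real.log (1 - x + x ^ 2 / 2) := by
    rw [← Real.log_mul ha.ne' hb.ne']
    exact Real.log_nonneg hab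
  have h1 := Real.log_le_sub_one_of_pos ha
  unfold catoniPsi
  split_ifs with h <;> linarith

lemma le_catoniPsi (x : ℝ) : x - x ^ 2 / 2 ≤ catoniPsi x := by
  obtain ⟨ha, hb, hab⟩ := catoniPsi_aux x
  have hlogab : 0 ≤ Real.log (1 + x + x ^ 2 / 2) + Real.log (1 - x + x ^ 2 / 2) := by
    rw [← Real.log_mul ha.ne' hb.ne']
    exact Real.log_nonneg hab
  have h1 := Real.log_le_sub_one_of_pos hb
  unfold catoniPsi
  split_ifs with h <;> linarith

lemma measurable_catoniPsi : Measurable catoniPsi := by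
  unfold catoniPsi
  have h1 : Measurable fun x : ℝ => 1 + x + x ^ 2 / 2 :=
    (measurable_const.add measurable_id).add ((measurable_id.pow_const 2).div_const 2)
  have h2 : Measurable fun x : ℝ => 1 - x + x ^ 2 / 2 :=
    (measurable_const.sub measurable_id).add ((measurable_id.pow_const 2).div_const 2)
  exact Measurable.ite (measurableSet_le measurable_const measurable_id)
    (Real.measurable_log.comp h1) ((Real.measurable_log.comp h2).neg)

theorem catoni_mean_bound {Ω : Type*} [MeasurableSpace Ω] (P : Measure Ω)
    [IsProbabilityMeasure P]
    (X : Ω → ℝ) (μ σ l : ℝ) (hl : 0 < l)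
    (hX : MeasureTheory.MemLp X 2 P)
    (hmean : ∫ ω, X ω ∂P = μ)
    (hvar : ProbabilityTheory.variance X P = σ ^ 2) :
    |∫ ω, catoniPsi (l * (X ω - μ)) ∂P| ≤ l ^ 2 * σ ^ 2 / 2 := by
  set Y : Ω → ℝ := fun ω => l * (X ω - μ) with hYdef
  have hY2 : MemLp Y 2 P := (hX.sub (memLp_const μ)).const_mul l
  have hYint : Integrable Y P := hY2.integrable one_le_two
  have hY2int : Integrable (fun ω => (Y ω) ^ 2) P := by
    simpa [sq] using hY2.integrable_sq
  have hXint : Integrable X P := hX.integrable one_le_two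
  have hmeas : AEStronglyMeasurable (fun ω => catoniPsi (Y ω)) P :=
    (measurable_catoniPsi.comp_aemeasurable
      hY2.aestronglyMeasurable.aemeasurable).aestronglyMeasurable
  have hbound : ∀ ω, ‖catoniPsi (Y ω)‖ ≤ |Y ω| + (Y ω) ^ 2 / 2 := by
    intro ω
    have h1 := catoniPsi_le (Y ω)
    have h2 := le_catoniPsi (Y ω)
    have h3 := le_abs_self (Y ω)
    have h4 := neg_abs_le (Y ω)
    rw [Real.norm_eq_abs, abs_le]
    constructor <;> linarith
  have hgint : Integrable (fun ω => |Y ω| + (Y ω) ^ 2 / 2) P :=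
    hYint.abs.add (hY2int.div_const 2)
  have hfint : Integrable (fun ω => catoniPsi (Y ω)) P :=
    Integrable.mono' hgint hmeas (Filter.Eventually.of_forall hbound)
  -- mean of Y is 0
  have hYmean : ∫ ω, Y ω ∂P = 0 := by
    simp only [hYdef]
    rw [integral_const_mul, integral_sub hXint (integrable_const μ), hmean]
    simp
  -- integral of Y^2 is l^2 σ^2
  have hXμsq : ∫ ω, (X ω - μ) ^ 2 ∂P = σ ^ 2 := by
    rw [← hvar, variance_eq_integral hX.aestronglyMeasurable.aemeasurable]
    simp [hmean]
  have hY2mean : ∫ ω, (Y ω) ^ 2 ∂P = l ^ 2 * σ ^ 2 := by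
    simp only [hYdef, mul_pow]
    rw [integral_const_mul, hXμsq]
  have hupper : ∫ ω, catoniPsi (Y ω) ∂P ≤ l ^ 2 * σ ^ 2 / 2 := by
    have hint2 : Integrable (fun ω => Y ω + Y ω ^ 2 / 2) P := hYint.add (hY2int.div_const 2)
    have := integral_mono hfint hint2 (fun ω => catoniPsi_le (Y ω))
    rwa [integral_add hYint (hY2int.div_const 2), integral_div, hYmean, hY2mean,
      zero_add] at this
  have hlower : -(l ^ 2 * σ ^ 2 / 2) ≤ ∫ ω, catoniPsi (Y ω) ∂P := by
    have hint2 : Integrable (fun ω => Y ω - Y ω ^ 2 / 2) P := hYint.sub (hY2int.div_const 2)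
    have := integral_mono hint2 hfint (fun ω => le_catoniPsi (Y ω))
    rwa [integral_sub hYint (hY2int.div_const 2), integral_div, hYmean, hY2mean,
      zero_sub] at this
  rw [abs_le]
  exact ⟨hlower, hupper⟩
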